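/- Let T be a unitary diagonal operator on H, with T e_n = α_n e_n for all n where |α_n| = 1. Then there exists a sequence {T_n}_{n∈ℕ} of diagonal operators on H such that P(T_n) = H for all n (indeed T_n^{2^n} = I) and ‖T_n − T‖ → 0 as n → ∞. In particular, the set of diagonal operators S with P(S) = H is dense in the set of all unitary diagonal operators with respect to the operator norm. -/

import Mathlib

open Complex ENNReal

section DiagAux

variable {H : Type*} [NormedAddCommGroup H] [InnerProductSpace ℂ H] [CompleteSpace H]

lemma memℓp_mul_aux {β : ℕ → ℂ} {C : ℝ} (hβ : ∀ j, ‖β j‖ ≤ C)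
    (f : lp (fun _ : ℕ => ℂ) 2) : Memℓp (fun j => β j * f j) 2 := by
  have hC : 0 ≤ C := le_trans (norm_nonneg _) (hβ 0)
  apply memℓp_gen
  have h2 : (0:ℝ) < (2 : ℝ≥0∞).toReal := by norm_num
  have hs := (lp.memℓp f).summable h2
  refine Summable.of_nonneg_of_le (fun j => by positivity) ?_
    (hs.mul_left (C ^ (2:ℝ≥0∞).toReal))
  intro j
  rw [← Real.mul_rpow hC (norm_nonneg _)]
  exact Real.rpow_le_rpow (norm_nonneg _) (by
    rw [norm_mul]
    exact mul_le_mul_of_nonneg_right (hβ j) (norm_nonneg _)) h2.le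

noncomputable def diagLM (e : HilbertBasis ℕ ℂ H) (β : ℕ → ℂ) {C : ℝ}
    (hβ : ∀ j, ‖β j‖ ≤ C) : H →ₗ[ℂ] H where
  toFun x := e.repr.symm ⟨fun j => β j * e.repr x j, memℓp_mul_aux hβ _⟩
  map_add' x y := by
    dsimp only
    rw [← map_add]
    congr 1
    apply lp.ext
    funext j
    simp [mul_add]
    rfl
  map_smul' c x := by
    dsimp only
    rw [RingHom.id_apply, ← map_smul]
    congr 1
    apply lp.ext
    funext j
    simp only [map_smul, lp.coeFn_smul, Pi.smul_apply, smul_eq_mul]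
    ring

lemma diagLM_norm_le (e : HilbertBasis ℕ ℂ H) (β : ℕ → ℂ) {C : ℝ}
    (hβ : ∀ j, ‖β j‖ ≤ C) (x : H) : ‖diagLM e β hβ x‖ ≤ C * ‖x‖ := by
  have hC : 0 ≤ C := le_trans (norm_nonneg _) (hβ 0)
  have h2 : (0:ℝ) < (2 : ℝ≥0∞).toReal := by norm_num
  show ‖e.repr.symm (⟨fun j => β j * e.repr x j, memℓp_mul_aux hβ _⟩ : lp (fun _ : ℕ => ℂ) 2)‖ ≤ C * ‖x‖
  rw [LinearIsometryEquiv.norm_map]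
  apply lp.norm_le_of_tsum_le h2 (by positivity)
  have hfsum := (lp.memℓp (e.repr x)).summable h2
  have hstep : ∀ i, ‖β i * e.repr x i‖ ^ (2:ℝ≥0∞).toReal
      ≤ C ^ (2:ℝ≥0∞).toReal * ‖e.repr x i‖ ^ (2:ℝ≥0∞).toReal := by
    intro i
    rw [← Real.mul_rpow hC (norm_nonneg _)]
    exact Real.rpow_le_rpow (norm_nonneg _) (by
      rw [norm_mul]
      exact mul_le_mul_of_nonneg_right (hβ i) (norm_nonneg _)) h2.le
  calc ∑' i, ‖β i * e.repr x i‖ ^ (2:ℝ≥0∞).toReal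
      ≤ ∑' i, C ^ (2:ℝ≥0∞).toReal * ‖e.repr x i‖ ^ (2:ℝ≥0∞).toReal :=
        Summable.tsum_le_tsum hstep ((memℓp_mul_aux hβ (e.repr x)).summable h2) (hfsum.mul_left _)
    _ = C ^ (2:ℝ≥0∞).toReal * ‖e.repr x‖ ^ (2:ℝ≥0∞).toReal := by
        rw [tsum_mul_left, lp.norm_rpow_eq_tsum h2]
    _ = (C * ‖x‖) ^ (2:ℝ≥0∞).toReal := by
        rw [e.repr.norm_map x, Real.mul_rpow hC (norm_nonneg _)]

noncomputable def diagCLM (e : HilbertBasis ℕ ℂ H) (β : ℕ → ℂ) {C : ℝ}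
    (hβ : ∀ j, ‖β j‖ ≤ C) : H →L[ℂ] H :=
  LinearMap.mkContinuous (diagLM e β hβ) C (diagLM_norm_le e β hβ)

lemma diagCLM_apply (e : HilbertBasis ℕ ℂ H) (β : ℕ → ℂ) {C : ℝ}
    (hβ : ∀ j, ‖β j‖ ≤ C) (j : ℕ) : diagCLM e β hβ (e j) = β j • e j := by
  show e.repr.symm (⟨fun i => β i * e.repr (e j) i, memℓp_mul_aux hβ _⟩ : lp (fun _ : ℕ => ℂ) 2)
      = β j • e j
  have h1 : (⟨fun i => β i * e.repr (e j) i, memℓp_mul_aux hβ _⟩ : lp (fun _ : ℕ => ℂ) 2)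
      = β j • lp.single 2 j (1:ℂ) := by
    apply lp.ext
    funext i
    have := e.repr_self j
    simp only [this]
    by_cases hij : i = j
    · subst hij
      simp [lp.single_apply_self, lp.coeFn_smul]
    · simp [lp.single_apply_ne 2 j _ hij, lp.coeFn_smul, hij]
  rw [h1, map_smul, e.repr_symm_single]

lemma diagCLM_norm_le (e : HilbertBasis ℕ ℂ H) (β : ℕ → ℂ) {C : ℝ}
    (hβ : ∀ j, ‖β j‖ ≤ C) : ‖diagCLM e β hβ‖ ≤ C :=
  LinearMap.mkContinuous_norm_le _ (le_trans (norm_nonneg _) (hβ 0)) _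

lemma dense_span_range (e : HilbertBasis ℕ ℂ H) :
    Dense (Submodule.span ℂ (Set.range e) : Set H) := by
  rw [Submodule.dense_iff_topologicalClosure_eq_top]
  exact e.dense_span

end DiagAux

lemma diagCLM_pow_apply {H : Type*} [NormedAddCommGroup H] [InnerProductSpace ℂ H]
    [CompleteSpace H] (e : HilbertBasis ℕ ℂ H) (β : ℕ → ℂ) {C : ℝ}
    (hβ : ∀ j, ‖β j‖ ≤ C) (m j : ℕ) :
    ((diagCLM e β hβ) ^ m) (e j) = β j ^ m • e j := by
  induction m with
  | zero => simp
  | succ m ih =>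
    rw [pow_succ', ContinuousLinearMap.mul_apply, ih, map_smul, diagCLM_apply,
      smul_smul, ← pow_succ]

lemma chord_le (a b : ℝ) :
    ‖Complex.exp (a * I) - Complex.exp (b * I)‖ ≤ 2 * |a - b| := by
  have habs : ‖(↑(a - b) * I : ℂ)‖ = |a - b| := by
    rw [norm_mul, Complex.norm_I, Complex.norm_real, mul_one, Real.norm_eq_abs]
  rcases le_or_gt |a - b| 1 with h | h
  · have key : Complex.exp (↑a * I) - Complex.exp (↑b * I)
        = Complex.exp (↑b * I) * (Complex.exp (↑(a - b) * I) - 1) := by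
      rw [mul_sub, mul_one, ← Complex.exp_add]
      push_cast
      ring_nf
    rw [key, norm_mul,
      Complex.norm_exp_ofReal_mul_I, one_mul]
    calc ‖Complex.exp (↑(a - b) * I) - 1‖
        ≤ 2 * ‖(↑(a - b) * I : ℂ)‖ :=
          Complex.norm_exp_sub_one_le (by rwa [habs])
      _ = 2 * |a - b| := by rw [habs]
  · have h2 : ‖Complex.exp (↑a * I) - Complex.exp (↑b * I)‖ ≤ 2 := by
      refine (norm_sub_le _ _).trans ?_
      rw [Complex.norm_exp_ofReal_mul_I,
        Complex.norm_exp_ofReal_mul_I]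
      norm_num
    linarith

/-- Every unitary diagonal operator `T e_n = α_n • e_n` (with `|α_n| = 1`) is the
operator-norm limit of a sequence of diagonal operators `T_n` with every point of `H`
periodic for each `T_n`; indeed one may take `T_n ^ (2 ^ n) = 1`. Hence the diagonal
operators with all points periodic are dense among the unitary diagonal operators. -/
theorem unitary_diagonal_approx_by_diagonal_with_all_points_periodic
    {H : Type*} [NormedAddCommGroup H] [InnerProductSpace ℂ H] [CompleteSpace H]
    (e : HilbertBasis ℕ ℂ H) (α : ℕ → ℂ) (T : H →L[ℂ] H)
    (hT : ∀ n, T (e n) = α n • e n) (hα : ∀ n, ‖α n‖ = 1) :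
    ∃ Tn : ℕ → (H →L[ℂ] H),
      (∀ n, ∃ β : ℕ → ℂ, ∀ j, Tn n (e j) = β j • e j) ∧
      (∀ n, {x : H | ∃ m : ℕ, 0 < m ∧ ((Tn n) ^ m) x = x} = Set.univ) ∧
      (∀ n, (Tn n) ^ (2 ^ n) = 1) ∧
      Filter.Tendsto (fun n => ‖Tn n - T‖) Filter.atTop (nhds 0) := by
  have hπ : (0:ℝ) < Real.pi := Real.pi_pos
  set θ : ℕ → ℝ := fun j => (α j).arg with hθ
  have hexp : ∀ j, Complex.exp (↑(θ j) * I) = α j := by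
    intro j
    have := Complex.norm_mul_exp_arg_mul_I (α j)
    rwa [hα j, Complex.ofReal_one, one_mul] at this
  set k : ℕ → ℕ → ℤ := fun n j => round (θ j * 2 ^ n / (2 * Real.pi)) with hk
  set a : ℕ → ℕ → ℝ := fun n j => 2 * Real.pi * (k n j) / 2 ^ n with ha
  set β : ℕ → ℕ → ℂ := fun n j => Complex.exp (↑(a n j) * I) with hβ
  have hβnorm : ∀ n j, ‖β n j‖ ≤ 1 := by
    intro n j
    rw [hβ]
    rw [Complex.norm_exp_ofReal_mul_I]
  refine ⟨fun n => diagCLM e (β n) (hβnorm n), ?_, ?_, ?_, ?_⟩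
  · exact fun n => ⟨β n, fun j => diagCLM_apply e (β n) (hβnorm n) j⟩
  · intro n
    have hpow : (diagCLM e (β n) (hβnorm n)) ^ (2 ^ n) = 1 := by
      refine ContinuousLinearMap.ext_on (dense_span_range e) ?_
      rintro _ ⟨j, rfl⟩
      rw [diagCLM_pow_apply]
      have hβpow : β n j ^ (2 ^ n) = 1 := by
        simp only [hβ]
        rw [← Complex.exp_nat_mul]
        have h2n : ((2:ℂ) ^ n) ≠ 0 := pow_ne_zero _ two_ne_zero
        have harg : ((2 ^ n : ℕ) : ℂ) * (↑(a n j) * I) = (k n j : ℂ) * (2 * Real.pi * I) := by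
          simp only [ha]
          push_cast
          field_simp
        rw [harg, Complex.exp_int_mul_two_pi_mul_I]
      rw [hβpow, one_smul, ContinuousLinearMap.one_apply]
    ext x
    simp only [Set.mem_setOf_eq, Set.mem_univ, iff_true]
    exact ⟨2 ^ n, pow_pos (by norm_num) n, by rw [hpow, ContinuousLinearMap.one_apply]⟩
  · intro n
    refine ContinuousLinearMap.ext_on (dense_span_range e) ?_
    rintro _ ⟨j, rfl⟩
    rw [diagCLM_pow_apply]
    have hβpow : β n j ^ (2 ^ n) = 1 := by
      simp only [hβ]
      rw [← Complex.exp_nat_mul]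
      have h2n : ((2:ℂ) ^ n) ≠ 0 := pow_ne_zero _ two_ne_zero
      have harg : ((2 ^ n : ℕ) : ℂ) * (↑(a n j) * I) = (k n j : ℂ) * (2 * Real.pi * I) := by
        simp only [ha]
        push_cast
        field_simp
      rw [harg, Complex.exp_int_mul_two_pi_mul_I]
    rw [hβpow, one_smul, ContinuousLinearMap.one_apply]
  · -- norm bound and tendsto
    have hdiff : ∀ n j, ‖β n j - α j‖ ≤ 2 * (Real.pi / 2 ^ n) := by
      intro n j
      have h2n : (0:ℝ) < 2 ^ n := by positivity
      have hab : |a n j - θ j| ≤ Real.pi / 2 ^ n := by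
        have heq : a n j - θ j = (2 * Real.pi / 2 ^ n)
            * ((k n j : ℝ) - θ j * 2 ^ n / (2 * Real.pi)) := by
          rw [ha]
          field_simp
        rw [heq, abs_mul, abs_of_pos (by positivity)]
        have hround : |(k n j : ℝ) - θ j * 2 ^ n / (2 * Real.pi)| ≤ 1 / 2 := by
          rw [abs_sub_comm]
          exact abs_sub_round _
        calc 2 * Real.pi / 2 ^ n * |(k n j : ℝ) - θ j * 2 ^ n / (2 * Real.pi)|
            ≤ 2 * Real.pi / 2 ^ n * (1 / 2) :=
              mul_le_mul_of_nonneg_left hround (by positivity)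
          _ = Real.pi / 2 ^ n := by ring
      calc ‖β n j - α j‖ = ‖Complex.exp (↑(a n j) * I) - Complex.exp (↑(θ j) * I)‖ := by
            rw [hβ, hexp j]
        _ ≤ 2 * |a n j - θ j| := chord_le _ _
        _ ≤ 2 * (Real.pi / 2 ^ n) := by linarith
    have hTn : ∀ n, diagCLM e (β n) (hβnorm n) - T
        = diagCLM e (fun j => β n j - α j) (hdiff n) := by
      intro n
      refine ContinuousLinearMap.ext_on (dense_span_range e) ?_
      rintro _ ⟨j, rfl⟩
      rw [ContinuousLinearMap.sub_apply, diagCLM_apply, diagCLM_apply, hT j, sub_smul]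
    have hbound : ∀ n, ‖diagCLM e (β n) (hβnorm n) - T‖ ≤ 2 * (Real.pi / 2 ^ n) := by
      intro n
      rw [hTn n]
      exact diagCLM_norm_le e _ (hdiff n)
    refine squeeze_zero (fun n => norm_nonneg _) hbound ?_
    have hgeom : Filter.Tendsto (fun n : ℕ => ((1:ℝ)/2) ^ n) Filter.atTop (nhds 0) :=
      tendsto_pow_atTop_nhds_zero_of_lt_one (by norm_num) (by norm_num)
    have heq : (fun n : ℕ => 2 * (Real.pi / 2 ^ n))
        = fun n : ℕ => (2 * Real.pi) * ((1:ℝ)/2) ^ n := by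
      funext n
      rw [div_pow, one_pow]
      ring
    rw [heq]
    simpa using hgeom.const_mul (2 * Real.pi)
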